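/- Let n ≥ 3 be odd and let λ_j = (1+2cos(2πj/n))/3 for 0 ≤ j ≤ (n-1)/2. Then ∑_{j=0}^{(n-1)/2} ∑_{k=0, λ_k≠λ_j}^{(n-1)/2} 1/|λ_j − λ_k| ≤ (8n·log(n)/π)². -/

import Mathlib

lemma gap_eq' (n j k : ℕ) (lam : ℕ → ℝ)
    (hlam : ∀ j, lam j = (1 + 2 * Real.cos (2 * Real.pi * j / n)) / 3) :
    lam j - lam k = 4/3 * Real.sin (Real.pi * ((j:ℝ)+k)/n) * Real.sin (Real.pi * ((k:ℝ)-j)/n) := by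
  rw [hlam j, hlam k]
  have h : (1 + 2 * Real.cos (2 * Real.pi * j / n)) / 3 - (1 + 2 * Real.cos (2 * Real.pi * k / n)) / 3
      = 2/3 * (Real.cos (2 * Real.pi * j / n) - Real.cos (2 * Real.pi * k / n)) := by ring
  rw [h, Real.cos_sub_cos]
  have e1 : (2 * Real.pi * j / n + 2 * Real.pi * k / n)/2 = Real.pi * ((j:ℝ)+k)/n := by ring
  have e2 : (2 * Real.pi * j / n - 2 * Real.pi * k / n)/2 = -(Real.pi * ((k:ℝ)-j)/n) := by ring
  rw [e1, e2, Real.sin_neg]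
  ring

lemma sines_pos (n j k : ℕ) (hn : 3 ≤ n) (hjk : j < k) (hk : 2 * k + 1 ≤ n) :
    0 < Real.sin (Real.pi * ((j:ℝ)+k)/n) ∧ 0 < Real.sin (Real.pi * ((k:ℝ)-j)/n) := by
  have hn0 : (0:ℝ) < n := by positivity
  have hjr : (j:ℝ) < k := by exact_mod_cast hjk
  have hjkn : (j:ℝ) + k < n := by
    have : j + k < n := by omega
    exact_mod_cast this
  have hkn : (k:ℝ) - j < n := by
    have : (k:ℝ) ≤ n := by exact_mod_cast (by omega : k ≤ n)
    have h0 : (0:ℝ) ≤ j := Nat.cast_nonneg j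
    nlinarith
  have hk0 : (0:ℝ) < k := by
    have : 0 < k := by omega
    exact_mod_cast this
  constructor
  · apply Real.sin_pos_of_pos_of_lt_pi
    · positivity
    · rw [div_lt_iff₀ hn0]
      nlinarith [Real.pi_pos]
  · apply Real.sin_pos_of_pos_of_lt_pi
    · have : (0:ℝ) < (k:ℝ) - j := by linarith
      positivity
    · rw [div_lt_iff₀ hn0]
      nlinarith [Real.pi_pos]

lemma gap_pos (n j k : ℕ) (hn : 3 ≤ n) (lam : ℕ → ℝ)
    (hlam : ∀ j, lam j = (1 + 2 * Real.cos (2 * Real.pi * j / n)) / 3)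
    (hjk : j < k) (hk : 2 * k + 1 ≤ n) : 0 < lam j - lam k := by
  rw [gap_eq' n j k lam hlam]
  obtain ⟨h1, h2⟩ := sines_pos n j k hn hjk hk
  positivity



set_option maxHeartbeats 2000000 in
lemma pair_bound (n j k : ℕ) (hn : 3 ≤ n) (lam : ℕ → ℝ)
    (hlam : ∀ j, lam j = (1 + 2 * Real.cos (2 * Real.pi * j / n)) / 3)
    (hjk : j < k) (hk : 2 * k + 1 ≤ n) :
    1/|lam j - lam k| ≤ 3*(n:ℝ)^2/16 *
      (1/((k:ℝ)*((k:ℝ)-j)) + 1/(((k:ℝ)-j)*((n:ℝ)-j-k))) := by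
  have hn0 : (0:ℝ) < n := by positivity
  have hjr : (j:ℝ) < k := by exact_mod_cast hjk
  have hj0 : (0:ℝ) ≤ j := Nat.cast_nonneg j
  have hk0 : (0:ℝ) < k := by
    have : 0 < k := by omega
    exact_mod_cast this
  have hkn : 2*(k:ℝ) + 1 ≤ n := by exact_mod_cast hk
  have hd0 : (0:ℝ) < (k:ℝ) - j := by linarith
  have hnjk : (0:ℝ) < (n:ℝ) - j - k := by linarith
  have hpi := Real.pi_pos
  obtain ⟨hsa, hsb⟩ := sines_pos n j k hn hjk hk
  have hb2 : Real.pi * ((k:ℝ)-j)/n ≤ Real.pi/2 := by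
    rw [div_le_div_iff₀ hn0 two_pos]
    nlinarith
  have hsb' : 2*((k:ℝ)-j)/n ≤ Real.sin (Real.pi * ((k:ℝ)-j)/n) := by
    have h := Real.mul_le_sin (x := Real.pi * ((k:ℝ)-j)/n) (by positivity) hb2
    have e : 2/Real.pi * (Real.pi * ((k:ℝ)-j)/n) = 2*((k:ℝ)-j)/n := by
      field_simp
    rw [e] at h; linarith
  have gap := gap_eq' n j k lam hlam
  have hgap : 0 < lam j - lam k := by
    rw [gap]
    have : (0:ℝ) < 4/3 := by norm_num
    exact mul_pos (mul_pos this hsa) hsb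
  rw [abs_of_pos hgap, gap]
  have hg2 : (0:ℝ) ≤ 3*(n:ℝ)^2/16 * (1/(((k:ℝ)-j)*((n:ℝ)-j-k))) :=
    mul_nonneg (by positivity) (le_of_lt (by exact div_pos one_pos (mul_pos hd0 hnjk)))
  have hg1 : (0:ℝ) ≤ 3*(n:ℝ)^2/16 * (1/((k:ℝ)*((k:ℝ)-j))) :=
    mul_nonneg (by positivity) (le_of_lt (by exact div_pos one_pos (mul_pos hk0 hd0)))
  rcases le_or_gt (2*((j:ℝ)+k)) n with hc | hc
  · have ha2 : Real.pi * ((j:ℝ)+k)/n ≤ Real.pi/2 := by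
      rw [div_le_div_iff₀ hn0 two_pos]
      nlinarith
    have hsa' : 2*((j:ℝ)+k)/n ≤ Real.sin (Real.pi * ((j:ℝ)+k)/n) := by
      have h := Real.mul_le_sin (x := Real.pi * ((j:ℝ)+k)/n) (by positivity) ha2
      have e : 2/Real.pi * (Real.pi * ((j:ℝ)+k)/n) = 2*((j:ℝ)+k)/n := by field_simp
      rw [e] at h; linarith
    have h1 : 2*(k:ℝ)/n ≤ Real.sin (Real.pi * ((j:ℝ)+k)/n) := by
      refine le_trans ?_ hsa'
      gcongr
      linarith
    have hlow : 16*((k:ℝ)*((k:ℝ)-j))/(3*(n:ℝ)^2) ≤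
        4/3 * Real.sin (Real.pi * ((j:ℝ)+k)/n) * Real.sin (Real.pi * ((k:ℝ)-j)/n) := by
      have e : 16*((k:ℝ)*((k:ℝ)-j))/(3*(n:ℝ)^2) = 4/3 * (2*(k:ℝ)/n) * (2*((k:ℝ)-j)/n) := by
        field_simp; ring
      rw [e]
      have hc0 : (0:ℝ) ≤ 2*((k:ℝ)-j)/n := div_nonneg (by linarith) hn0.le
      have hm := mul_le_mul h1 hsb' hc0 hsa.le
      nlinarith [hm]
    calc 1/(4/3 * Real.sin (Real.pi * ((j:ℝ)+k)/n) * Real.sin (Real.pi * ((k:ℝ)-j)/n))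
        ≤ 1/(16*((k:ℝ)*((k:ℝ)-j))/(3*(n:ℝ)^2)) := by
          have hp : (0:ℝ) < 16*((k:ℝ)*((k:ℝ)-j))/(3*(n:ℝ)^2) :=
            div_pos (by nlinarith [mul_pos hk0 hd0]) (by positivity)
          apply one_div_le_one_div_of_le hp hlow
      _ = 3*(n:ℝ)^2/16 * (1/((k:ℝ)*((k:ℝ)-j))) := by field_simp
      _ ≤ _ := by rw [mul_add]; linarith [hg2]
  · have hpia : Real.pi - Real.pi * ((j:ℝ)+k)/n = Real.pi * ((n:ℝ)-j-k)/n := by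
      field_simp; ring
    have hsin_eq : Real.sin (Real.pi * ((j:ℝ)+k)/n) = Real.sin (Real.pi * ((n:ℝ)-j-k)/n) := by
      rw [← hpia, Real.sin_pi_sub]
    have ha2 : Real.pi * ((n:ℝ)-j-k)/n ≤ Real.pi/2 := by
      rw [div_le_div_iff₀ hn0 two_pos]
      have h2 : 2*((n:ℝ)-j-k) ≤ n := by linarith
      have h3 := mul_le_mul_of_nonneg_left h2 hpi.le
      linarith [h3]
    have hsa' : 2*((n:ℝ)-j-k)/n ≤ Real.sin (Real.pi * ((j:ℝ)+k)/n) := by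
      rw [hsin_eq]
      have hx0 : (0:ℝ) ≤ Real.pi * ((n:ℝ)-j-k)/n := div_nonneg (mul_nonneg hpi.le hnjk.le) hn0.le
      have h := Real.mul_le_sin (x := Real.pi * ((n:ℝ)-j-k)/n) hx0 ha2
      have e : 2/Real.pi * (Real.pi * ((n:ℝ)-j-k)/n) = 2*((n:ℝ)-j-k)/n := by field_simp
      rw [e] at h; linarith
    have hlow : 16*(((k:ℝ)-j)*((n:ℝ)-j-k))/(3*(n:ℝ)^2) ≤
        4/3 * Real.sin (Real.pi * ((j:ℝ)+k)/n) * Real.sin (Real.pi * ((k:ℝ)-j)/n) := by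
      have e : 16*(((k:ℝ)-j)*((n:ℝ)-j-k))/(3*(n:ℝ)^2) = 4/3 * (2*((n:ℝ)-j-k)/n) * (2*((k:ℝ)-j)/n) := by
        field_simp; ring
      rw [e]
      have hc0 : (0:ℝ) ≤ 2*((k:ℝ)-j)/n := div_nonneg (by linarith) hn0.le
      have hm := mul_le_mul hsa' hsb' hc0 hsa.le
      nlinarith [hm]
    calc 1/(4/3 * Real.sin (Real.pi * ((j:ℝ)+k)/n) * Real.sin (Real.pi * ((k:ℝ)-j)/n))
        ≤ 1/(16*(((k:ℝ)-j)*((n:ℝ)-j-k))/(3*(n:ℝ)^2)) := by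
          have hp : (0:ℝ) < 16*(((k:ℝ)-j)*((n:ℝ)-j-k))/(3*(n:ℝ)^2) :=
            div_pos (by nlinarith [mul_pos hd0 hnjk]) (by positivity)
          apply one_div_le_one_div_of_le hp hlow
      _ = 3*(n:ℝ)^2/16 * (1/(((k:ℝ)-j)*((n:ℝ)-j-k))) := by field_simp
      _ ≤ _ := by rw [mul_add]; linarith [hg1]


lemma harm_cast (n : ℕ) : ((harmonic n : ℚ) : ℝ) = ∑ i ∈ Finset.range n, 1/((i:ℝ)+1) := by
  rw [harmonic]
  push_cast
  simp [one_div]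

lemma harm_sum_le (n : ℕ) (s : Finset ℕ) (hs : s ⊆ Finset.range n) :
    ∑ i ∈ s, 1/((i:ℝ)+1) ≤ 1 + Real.log n := by
  calc ∑ i ∈ s, 1/((i:ℝ)+1) ≤ ∑ i ∈ Finset.range n, 1/((i:ℝ)+1) := by
        apply Finset.sum_le_sum_of_subset_of_nonneg hs
        intros; positivity
    _ = ((harmonic n : ℚ) : ℝ) := (harm_cast n).symm
    _ ≤ 1 + Real.log n := harmonic_le_one_add_log n

lemma harm_sum_le' (n : ℕ) (s : Finset ℕ) (hs : s ⊆ Finset.Icc 1 n) :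
    ∑ i ∈ s, 1/(i:ℝ) ≤ 1 + Real.log n := by
  calc ∑ i ∈ s, 1/(i:ℝ) ≤ ∑ i ∈ Finset.Icc 1 n, 1/(i:ℝ) := by
        apply Finset.sum_le_sum_of_subset_of_nonneg hs
        intros; positivity
    _ = ((harmonic n : ℚ) : ℝ) := by
        rw [harmonic_eq_sum_Icc]
        push_cast
        simp [one_div]
    _ ≤ 1 + Real.log n := harmonic_le_one_add_log n

lemma refl1 (x : ℕ) : ∑ y ∈ Finset.range x, 1/((x:ℝ)-y) = ∑ y ∈ Finset.range x, 1/((y:ℝ)+1) := by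
  rw [← Finset.sum_range_reflect (fun y => 1/((x:ℝ)-y)) x]
  apply Finset.sum_congr rfl
  intro j hj
  simp only [Finset.mem_range] at hj
  congr 1
  have h : x - 1 - j + (j+1) = x := by omega
  have h' : ((x - 1 - j : ℕ):ℝ) + (j+1) = x := by exact_mod_cast congrArg (Nat.cast : ℕ → ℝ) h
  linarith

lemma refl2 (n x : ℕ) : ∑ y ∈ Finset.range x, 1/(((x:ℝ)-y)*((n:ℝ)-y-x))
    = ∑ y ∈ Finset.range x, 1/(((y:ℝ)+1)*((n:ℝ)+1+y-2*x)) := by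
  rw [← Finset.sum_range_reflect (fun y => 1/(((x:ℝ)-y)*((n:ℝ)-y-x))) x]
  apply Finset.sum_congr rfl
  intro j hj
  simp only [Finset.mem_range] at hj
  have h : x - 1 - j + (j+1) = x := by omega
  have h' : ((x - 1 - j : ℕ):ℝ) + (j+1) = x := by exact_mod_cast congrArg (Nat.cast : ℕ → ℝ) h
  congr 1
  have e1 : (x:ℝ) - ((x-1-j:ℕ):ℝ) = (j:ℝ)+1 := by linarith
  have e2 : (n:ℝ) - ((x-1-j:ℕ):ℝ) - x = (n:ℝ)+1+j-2*x := by linarith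
  rw [e1, e2]

lemma inj_sum (n m y : ℕ) (hm : n = 2*m+1) (hy : y < m+1) :
    ∑ x ∈ Finset.Ioo y (m+1), 1/((n:ℝ)+1+y-2*x) ≤ 1 + Real.log n := by
  have e : ∀ x ∈ Finset.Ioo y (m+1), 1/((n:ℝ)+1+y-2*x) = 1/(((n+1+y-2*x : ℕ)):ℝ) := by
    intro x hx
    simp only [Finset.mem_Ioo] at hx
    congr 1
    have h : 2*x ≤ n+1+y := by omega
    push_cast [Nat.cast_sub h]
    ring
  rw [Finset.sum_congr rfl e]
  have hinj : ∀ a ∈ Finset.Ioo y (m+1), ∀ b ∈ Finset.Ioo y (m+1),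
      n+1+y-2*a = n+1+y-2*b → a = b := by
    intro a ha b hb hab
    simp only [Finset.mem_Ioo] at ha hb
    omega
  have himg : ∑ x ∈ Finset.Ioo y (m+1), 1/(((n+1+y-2*x : ℕ)):ℝ)
      = ∑ i ∈ (Finset.Ioo y (m+1)).image (fun x : ℕ => (n+1+y-2*x : ℕ)), 1/(i:ℝ) :=
    (Finset.sum_image (g := fun x : ℕ => (n+1+y-2*x : ℕ)) (f := fun i : ℕ => 1/(i:ℝ)) hinj).symm
  rw [himg]
  apply harm_sum_le'
  intro i hi
  simp only [Finset.mem_image, Finset.mem_Ioo] at hi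
  obtain ⟨x, ⟨hx1, hx2⟩, rfl⟩ := hi
  simp only [Finset.mem_Icc]
  omega



set_option maxHeartbeats 1000000 in
/-- For odd `n ≥ 3` and `λ_j = (1 + 2cos(2πj/n))/3`, the sum of reciprocals of
distinct eigenvalue gaps satisfies
`∑_{j=0}^{(n-1)/2} ∑_{k : λ_k ≠ λ_j} 1/|λ_j − λ_k| ≤ (8n·log n/π)²`. -/
theorem sum_inv_eigenvalue_gaps_le (n : ℕ) (hn : 3 ≤ n) (hodd : Odd n)
    (lam : ℕ → ℝ) (hlam : ∀ j, lam j = (1 + 2 * Real.cos (2 * Real.pi * j / n)) / 3) :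
    ∑ j ∈ Finset.range ((n - 1) / 2 + 1),
      ∑ k ∈ (Finset.range ((n - 1) / 2 + 1)).filter (fun k => lam k ≠ lam j),
        1 / |lam j - lam k| ≤ (8 * n * Real.log n / Real.pi) ^ 2 := by
  obtain ⟨m, hm⟩ := hodd
  have hm' : n = 2*m+1 := by omega
  have hm1 : 1 ≤ m := by omega
  have hm2 : (n-1)/2 = m := by omega
  rw [hm2]
  have hn1 : (1:ℝ) ≤ n := by exact_mod_cast (by omega : 1 ≤ n)
  set H : ℝ := 1 + Real.log n with hH
  have hlog0 : 0 ≤ Real.log n := Real.log_nonneg hn1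
  have hH0 : 0 ≤ H := by rw [hH]; linarith
  set R := Finset.range (m+1) with hR
  set C : ℝ := 3*(n:ℝ)^2/16 with hC
  have hC0 : 0 ≤ C := by positivity
  -- distinctness
  have hlt : ∀ j k : ℕ, j < k → k ≤ m → lam k < lam j := by
    intro j k hjk hk
    have := gap_pos n j k hn lam hlam hjk (by omega)
    linarith
  -- Step 1: rewrite the filter
  have step1 : ∀ j ∈ R, (R.filter (fun k => lam k ≠ lam j))
      = (R.filter (fun k => k < j)) ∪ (R.filter (fun k => j < k)) := by
    intro j hj
    simp only [hR, Finset.mem_range] at hj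
    ext k
    simp only [Finset.mem_union, Finset.mem_filter, hR, Finset.mem_range]
    constructor
    · rintro ⟨hk, hne⟩
      rcases lt_trichotomy k j with h | h | h
      · exact Or.inl ⟨hk, h⟩
      · exact absurd (by rw [h]) hne
      · exact Or.inr ⟨hk, h⟩
    · rintro (⟨hk, h⟩ | ⟨hk, h⟩)
      · exact ⟨hk, ne_of_gt (hlt k j h (by omega))⟩
      · exact ⟨hk, ne_of_lt (hlt j k h (by omega))⟩
  have hdisj : ∀ j : ℕ, Disjoint (R.filter (fun k => k < j)) (R.filter (fun k => j < k)) := by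
    intro j
    apply Finset.disjoint_filter_filter'
    simp only [disjoint_iff_inf_le]
    intro k hk
    simp only [Pi.inf_apply, inf_Prop_eq] at hk
    omega
  have split : ∑ j ∈ R, ∑ k ∈ R.filter (fun k => lam k ≠ lam j), 1/|lam j - lam k|
      = (∑ j ∈ R, ∑ k ∈ R.filter (fun k => k < j), 1/|lam j - lam k|)
      + (∑ j ∈ R, ∑ k ∈ R.filter (fun k => j < k), 1/|lam j - lam k|) := by
    rw [← Finset.sum_add_distrib]
    apply Finset.sum_congr rfl
    intro j hj
    rw [step1 j hj, Finset.sum_union (hdisj j)]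
  -- T : canonical form
  have eqA : (∑ j ∈ R, ∑ k ∈ R.filter (fun k => k < j), 1/|lam j - lam k|)
      = ∑ k ∈ R, ∑ j ∈ R.filter (fun j => j < k), 1/|lam j - lam k| := by
    apply Finset.sum_congr rfl
    intro j _
    apply Finset.sum_congr rfl
    intro k _
    rw [abs_sub_comm]
  have eqB : (∑ j ∈ R, ∑ k ∈ R.filter (fun k => j < k), 1/|lam j - lam k|)
      = ∑ k ∈ R, ∑ j ∈ R.filter (fun j => j < k), 1/|lam j - lam k| := by
    apply Finset.sum_comm'
    intro j k
    simp only [Finset.mem_filter]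
    tauto
  rw [split, eqA, eqB]
  -- now goal: 2 * T ≤ RHS0 where T := ∑ k∈R ∑ j<k 1/|lam j - lam k|
  have hfr : ∀ k : ℕ, k ∈ R → R.filter (fun j => j < k) = Finset.range k := by
    intro k hk
    simp only [hR, Finset.mem_range] at hk
    ext i
    simp only [Finset.mem_filter, hR, Finset.mem_range]
    omega
  have Tbound : ∑ k ∈ R, ∑ j ∈ R.filter (fun j => j < k), 1/|lam j - lam k|
      ≤ C * (2 * (H * H)) := by
    have hstep : ∑ k ∈ R, ∑ j ∈ R.filter (fun j => j < k), 1/|lam j - lam k|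
        ≤ ∑ k ∈ R, ∑ j ∈ Finset.range k,
            (C * (1/((k:ℝ)*((k:ℝ)-j))) + C * (1/(((k:ℝ)-j)*((n:ℝ)-j-k)))) := by
      apply Finset.sum_le_sum
      intro k hk
      rw [hfr k hk]
      apply Finset.sum_le_sum
      intro j hj
      simp only [Finset.mem_range] at hj
      simp only [hR, Finset.mem_range] at hk
      have := pair_bound n j k hn lam hlam hj (by omega)
      rw [mul_add] at this
      exact this
    refine le_trans hstep ?_
    have expand : ∑ k ∈ R, ∑ j ∈ Finset.range k,
        (C * (1/((k:ℝ)*((k:ℝ)-j))) + C * (1/(((k:ℝ)-j)*((n:ℝ)-j-k))))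
        = C * (∑ k ∈ R, ∑ j ∈ Finset.range k, 1/((k:ℝ)*((k:ℝ)-j)))
        + C * (∑ k ∈ R, ∑ j ∈ Finset.range k, 1/(((k:ℝ)-j)*((n:ℝ)-j-k))) := by
      rw [Finset.mul_sum, Finset.mul_sum, ← Finset.sum_add_distrib]
      apply Finset.sum_congr rfl
      intro k _
      rw [Finset.mul_sum, Finset.mul_sum, ← Finset.sum_add_distrib]
    rw [expand]
    -- S1 bound
    have S1 : ∑ k ∈ R, ∑ j ∈ Finset.range k, 1/((k:ℝ)*((k:ℝ)-j)) ≤ H * H := by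
      have inner : ∀ k ∈ R, ∑ j ∈ Finset.range k, 1/((k:ℝ)*((k:ℝ)-j)) ≤ 1/(k:ℝ) * H := by
        intro k hk
        simp only [hR, Finset.mem_range] at hk
        have e : ∀ j ∈ Finset.range k, 1/((k:ℝ)*((k:ℝ)-j)) = 1/(k:ℝ) * (1/((k:ℝ)-j)) := by
          intro j _
          rw [one_div, one_div, one_div, mul_inv]
        rw [Finset.sum_congr rfl e, ← Finset.mul_sum, refl1 k]
        apply mul_le_mul_of_nonneg_left ?_ (by positivity)
        apply harm_sum_le n
        intro i hi
        simp only [Finset.mem_range] at hi ⊢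
        omega
      calc ∑ k ∈ R, ∑ j ∈ Finset.range k, 1/((k:ℝ)*((k:ℝ)-j))
          ≤ ∑ k ∈ R, 1/(k:ℝ) * H := Finset.sum_le_sum inner
        _ = (∑ k ∈ R, 1/(k:ℝ)) * H := by rw [Finset.sum_mul]
        _ ≤ H * H := by
            apply mul_le_mul_of_nonneg_right ?_ hH0
            rw [hR, Finset.sum_range_succ']
            simp only [Nat.cast_zero, Nat.cast_add, Nat.cast_one, div_zero, add_zero]
            exact harm_sum_le n _ (by intro i hi; simp only [Finset.mem_range] at hi ⊢; omega)
    -- S2 bound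
    have S2 : ∑ k ∈ R, ∑ j ∈ Finset.range k, 1/(((k:ℝ)-j)*((n:ℝ)-j-k)) ≤ H * H := by
      have e : ∀ k ∈ R, ∑ j ∈ Finset.range k, 1/(((k:ℝ)-j)*((n:ℝ)-j-k))
          = ∑ j ∈ Finset.range k, 1/(((j:ℝ)+1)*((n:ℝ)+1+j-2*k)) := fun k _ => refl2 n k
      rw [Finset.sum_congr rfl e]
      have comm : ∑ k ∈ R, ∑ j ∈ Finset.range k, 1/(((j:ℝ)+1)*((n:ℝ)+1+j-2*k))
          = ∑ j ∈ R, ∑ k ∈ Finset.Ioo j (m+1), 1/(((j:ℝ)+1)*((n:ℝ)+1+j-2*k)) := by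
        apply Finset.sum_comm'
        intro k j
        simp only [hR, Finset.mem_range, Finset.mem_Ioo]
        omega
      rw [comm]
      have inner : ∀ j ∈ R, ∑ k ∈ Finset.Ioo j (m+1), 1/(((j:ℝ)+1)*((n:ℝ)+1+j-2*k))
          ≤ 1/((j:ℝ)+1) * H := by
        intro j hj
        simp only [hR, Finset.mem_range] at hj
        have e2 : ∀ k ∈ Finset.Ioo j (m+1), 1/(((j:ℝ)+1)*((n:ℝ)+1+j-2*k))
            = 1/((j:ℝ)+1) * (1/((n:ℝ)+1+j-2*k)) := by
          intro k _
          rw [one_div, one_div, one_div, mul_inv]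
        rw [Finset.sum_congr rfl e2, ← Finset.mul_sum]
        apply mul_le_mul_of_nonneg_left ?_ (by positivity)
        exact inj_sum n m j hm' hj
      calc ∑ j ∈ R, ∑ k ∈ Finset.Ioo j (m+1), 1/(((j:ℝ)+1)*((n:ℝ)+1+j-2*k))
          ≤ ∑ j ∈ R, 1/((j:ℝ)+1) * H := Finset.sum_le_sum inner
        _ = (∑ j ∈ R, 1/((j:ℝ)+1)) * H := by rw [Finset.sum_mul]
        _ ≤ H * H := by
            apply mul_le_mul_of_nonneg_right ?_ hH0
            apply harm_sum_le n
            intro i hi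
            simp only [hR, Finset.mem_range] at hi ⊢
            omega
    calc C * (∑ k ∈ R, ∑ j ∈ Finset.range k, 1/((k:ℝ)*((k:ℝ)-j)))
        + C * (∑ k ∈ R, ∑ j ∈ Finset.range k, 1/(((k:ℝ)-j)*((n:ℝ)-j-k)))
        ≤ C * (H*H) + C * (H*H) := by
          apply add_le_add
          · exact mul_le_mul_of_nonneg_left S1 hC0
          · exact mul_le_mul_of_nonneg_left S2 hC0
      _ = C * (2 * (H * H)) := by ring
  -- final numeric
  have final : C * (2 * (H * H)) + C * (2 * (H * H)) ≤ (8 * n * Real.log n / Real.pi) ^ 2 := by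
    have hlog1 : 1 ≤ Real.log n := by
      rw [Real.le_log_iff_exp_le (by positivity)]
      calc Real.exp 1 ≤ 2.7182818286 := (Real.exp_one_lt_d9).le
        _ ≤ 3 := by norm_num
        _ ≤ n := by exact_mod_cast hn
    have hHle : H ≤ 2 * Real.log n := by rw [hH]; linarith
    have hpi := Real.pi_pos
    have hpi4 := Real.pi_le_four
    have e : (8 * (n:ℝ) * Real.log n / Real.pi) ^ 2
        = 64 * (n:ℝ)^2 * (Real.log n)^2 / Real.pi^2 := by
      rw [div_pow]
      ring_nf
    rw [e]
    have h1 : C * (2 * (H * H)) + C * (2 * (H * H)) = (3/4) * (n:ℝ)^2 * (H*H) := by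
      rw [hC]; ring
    rw [h1]
    have hHH : H * H ≤ 4 * (Real.log n)^2 := by nlinarith
    have h2' := mul_le_mul_of_nonneg_left hHH (show (0:ℝ) ≤ (3/4)*(n:ℝ)^2 by positivity)
    have h2 : (3/4) * (n:ℝ)^2 * (H*H) ≤ 3 * (n:ℝ)^2 * (Real.log n)^2 := by
      calc (3/4) * (n:ℝ)^2 * (H*H) ≤ (3/4)*(n:ℝ)^2 * (4 * (Real.log n)^2) := h2'
        _ = 3 * (n:ℝ)^2 * (Real.log n)^2 := by ring
    refine le_trans h2 ?_
    rw [le_div_iff₀ (by positivity)]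
    have hpisq : Real.pi^2 ≤ 16 := by nlinarith
    nlinarith [sq_nonneg ((n:ℝ) * Real.log n), hpisq]
  calc _ ≤ C * (2 * (H * H)) + C * (2 * (H * H)) := add_le_add Tbound Tbound
    _ ≤ _ := final
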